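/- Let $S_1, \ldots, S_M$ be $n \times n$ real symmetric positive definite matrices. Then the $M \times M$ real matrix $G$ with entries $G_{ij} = \det\big((\tfrac{1}{2}S_i^{-1} + \tfrac{1}{2}S_j^{-1})^{-1}\big)^{1/2} \big/ \big(\det(S_i)^{1/4}\det(S_j)^{1/4}\big)$ is symmetric and positive semidefinite. -/

import Mathlib

open Matrix MeasureTheory Real

namespace LGKernel

variable {n : ℕ}

noncomputable def mulVecE (B : Matrix (Fin n) (Fin n) ℝ) :
    EuclideanSpace ℝ (Fin n) →ₗ[ℝ] EuclideanSpace ℝ (Fin n) :=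
  ((WithLp.linearEquiv 2 ℝ (Fin n → ℝ)).symm.toLinearMap.comp
    (Matrix.toLin' B)).comp (WithLp.linearEquiv 2 ℝ (Fin n → ℝ)).toLinearMap

lemma mulVecE_apply (B : Matrix (Fin n) (Fin n) ℝ) (x : EuclideanSpace ℝ (Fin n)) :
    mulVecE B x = B.mulVec x := rfl

lemma det_mulVecE (B : Matrix (Fin n) (Fin n) ℝ) :
    LinearMap.det (mulVecE B) = B.det := by
  have : mulVecE B =
      ((WithLp.linearEquiv 2 ℝ (Fin n → ℝ)).symm : (Fin n → ℝ) →ₗ[ℝ] EuclideanSpace ℝ (Fin n)) ∘ₗ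
        (Matrix.toLin' B) ∘ₗ
        (((WithLp.linearEquiv 2 ℝ (Fin n → ℝ)).symm).symm :
          EuclideanSpace ℝ (Fin n) →ₗ[ℝ] (Fin n → ℝ)) := rfl
  rw [this, LinearMap.det_conj, LinearMap.det_toLin']

lemma integrable_base :
    Integrable (fun v : EuclideanSpace ℝ (Fin n) => rexp (-1 * ‖v‖ ^ 2)) := by
  have h := GaussianFourier.integrable_cexp_neg_mul_sq_norm_add
    (V := EuclideanSpace ℝ (Fin n)) (b := (1 : ℂ)) (by norm_num) 0 0
  have h2 := h.re
  refine h2.congr (Filter.Eventually.of_forall fun v => ?_)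
  simp only [zero_mul, add_zero, inner_zero_left, Complex.ofReal_zero, mul_zero]
  rw [show (-1 * (‖v‖:ℂ)^2 : ℂ) = ((-1 * ‖v‖^2 : ℝ) : ℂ) by push_cast; ring]
  exact Complex.exp_ofReal_re _

open scoped MatrixOrder in
/-- Gaussian integral for a positive definite quadratic form. -/
lemma gauss (A : Matrix (Fin n) (Fin n) ℝ) (hA : A.PosDef) :
    Integrable (fun x : EuclideanSpace ℝ (Fin n) => rexp (-(x ⬝ᵥ A *ᵥ x))) ∧
    ∫ x : EuclideanSpace ℝ (Fin n), rexp (-(x ⬝ᵥ A *ᵥ x)) =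
      (π : ℝ) ^ ((n : ℝ) / 2) * (Real.sqrt A.det)⁻¹ := by
  classical
  set B := CFC.sqrt A with hBdef
  have hBB : B * B = A := CFC.sqrt_mul_sqrt_self A hA.posSemidef.nonneg
  have hBh : B.IsHermitian := (CFC.sqrt_nonneg A).posSemidef.isHermitian
  have hBsymm : Bᵀ = B := by
    have := hBh.eq
    simpa [Matrix.transpose, Matrix.conjTranspose, Matrix.map] using this
  have hBdet_nonneg : 0 ≤ B.det := by
    rw [hBh.det_eq_prod_eigenvalues]
    exact Finset.prod_nonneg fun i _ =>
      (CFC.sqrt_nonneg A).posSemidef.eigenvalues_nonneg i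
  have hBdet_sq : B.det * B.det = A.det := by
    rw [← Matrix.det_mul, hBB]
  have hBdet : B.det = Real.sqrt A.det := by
    rw [← hBdet_sq, Real.sqrt_mul_self hBdet_nonneg]
  have hAdet_pos : 0 < A.det := hA.det_pos
  have hBdet_pos : 0 < B.det := by rw [hBdet]; exact Real.sqrt_pos.mpr hAdet_pos
  have hBdet_ne : LinearMap.det (mulVecE B) ≠ 0 := by
    rw [det_mulVecE]; exact ne_of_gt hBdet_pos
  -- pointwise identity
  have hpt : ∀ x : EuclideanSpace ℝ (Fin n),
      ‖mulVecE B x‖ ^ 2 = x ⬝ᵥ A *ᵥ x := by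
    intro x
    have h1 : ‖mulVecE B x‖ ^ 2 = (B *ᵥ x) ⬝ᵥ (B *ᵥ x) := by
      rw [← real_inner_self_eq_norm_sq, EuclideanSpace.inner_eq_star_dotProduct]
      simp [dotProduct, mul_comm, mulVecE_apply]
    have h3 : x ᵥ* B = B *ᵥ x := by
      conv_lhs => rw [← hBsymm]
      simp [Matrix.vecMul_transpose]
    have h2 : x ⬝ᵥ A *ᵥ x = (x ᵥ* B) ⬝ᵥ (B *ᵥ x) := by
      rw [← hBB, ← Matrix.mulVec_mulVec, Matrix.dotProduct_mulVec]
    rw [h1, h2, h3]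
  -- map of the measure
  have hcont : Continuous (mulVecE B) := (mulVecE B).continuous_of_finiteDimensional
  have hmap : Measure.map (mulVecE B) volume =
      ENNReal.ofReal |(LinearMap.det (mulVecE B))⁻¹| • volume :=
    Measure.map_linearMap_addHaar_eq_smul_addHaar volume hBdet_ne
  have hc_ne_top : (ENNReal.ofReal |(LinearMap.det (mulVecE B))⁻¹|) ≠ ⊤ :=
    ENNReal.ofReal_ne_top
  have hfmeas : AEStronglyMeasurable (fun v : EuclideanSpace ℝ (Fin n) => rexp (-1 * ‖v‖ ^ 2))
      (Measure.map (mulVecE B) volume) := by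
    exact (Continuous.aestronglyMeasurable (by continuity))
  have hint_map : Integrable (fun v : EuclideanSpace ℝ (Fin n) => rexp (-1 * ‖v‖ ^ 2))
      (Measure.map (mulVecE B) volume) := by
    rw [hmap]
    exact integrable_base.smul_measure hc_ne_top
  have hcomp : Integrable
      (fun x : EuclideanSpace ℝ (Fin n) => rexp (-1 * ‖mulVecE B x‖ ^ 2)) := by
    exact (integrable_map_measure hfmeas hcont.aemeasurable).mp hint_map
  have hEq : (fun x : EuclideanSpace ℝ (Fin n) => rexp (-1 * ‖mulVecE B x‖ ^ 2)) =
      fun x : EuclideanSpace ℝ (Fin n) => rexp (-(x ⬝ᵥ A *ᵥ x)) := by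
    funext x; rw [hpt x]; ring_nf
  constructor
  · rw [← hEq]; exact hcomp
  · have h1 : ∫ x : EuclideanSpace ℝ (Fin n), rexp (-(x ⬝ᵥ A *ᵥ x)) =
        ∫ x : EuclideanSpace ℝ (Fin n), rexp (-1 * ‖mulVecE B x‖ ^ 2) := by
      rw [hEq]
    rw [h1, ← integral_map hcont.aemeasurable hfmeas, hmap, integral_smul_measure]
    rw [GaussianFourier.integral_rexp_neg_mul_sq_norm one_pos]
    rw [det_mulVecE, hBdet]
    have hfin : (Module.finrank ℝ (EuclideanSpace ℝ (Fin n)) : ℝ) = n := by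
      simp [finrank_euclideanSpace_fin]
    rw [hfin]
    rw [ENNReal.toReal_ofReal (abs_nonneg _), abs_of_nonneg (by positivity)]
    rw [div_one, smul_eq_mul]
    ring


lemma posDef_smul {A : Matrix (Fin n) (Fin n) ℝ} (hA : A.PosDef) {c : ℝ} (hc : 0 < c) :
    (c • A).PosDef := by
  refine ⟨?_, fun x hx => ?_⟩
  · have h := hA.1
    unfold Matrix.IsHermitian at *
    rw [Matrix.conjTranspose_smul, h]
    simp
  · exact (hA.smul hc).2 hx

end LGKernel

open LGKernel MeasureTheory Real Matrix

theorem lg_kernel_gram_posSemidef {n M : ℕ}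
    (S : Fin M → Matrix (Fin n) (Fin n) ℝ) (hS : ∀ i, (S i).PosDef)
    (G : Matrix (Fin M) (Fin M) ℝ)
    (hG : ∀ i j, G i j =
      (((1 / 2 : ℝ) • (S i)⁻¹ + (1 / 2 : ℝ) • (S j)⁻¹)⁻¹).det ^ ((1 : ℝ) / 2) /
        ((S i).det ^ ((1 : ℝ) / 4) * (S j).det ^ ((1 : ℝ) / 4))) :
    G.IsSymm ∧ G.PosSemidef := by
  classical
  set E := EuclideanSpace ℝ (Fin n)
  set P : Fin M → Fin M → Matrix (Fin n) (Fin n) ℝ :=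
    fun i j => (1 / 2 : ℝ) • (S i)⁻¹ + (1 / 2 : ℝ) • (S j)⁻¹ with hPdef
  have half_pos : (0:ℝ) < 1/2 := by norm_num
  have hP : ∀ i j, (P i j).PosDef := fun i j =>
    (posDef_smul (hS i).inv half_pos).add (posDef_smul (hS j).inv half_pos)
  have hPd : ∀ i j, 0 < (P i j).det := fun i j => (hP i j).det_pos
  have hd : ∀ i, 0 < (S i).det := fun i => (hS i).det_pos
  set c : Fin M → ℝ := fun i => π ^ (-(n:ℝ)/4) * (S i).det ^ (-(1/4 : ℝ)) with hcdef
  set φ : Fin M → E → ℝ := fun i x =>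
    c i * rexp (-(x ⬝ᵥ ((1/2:ℝ) • (S i)⁻¹) *ᵥ x)) with hφdef
  have hprod : ∀ i j, ∀ x : E, φ i x * φ j x =
      (c i * c j) * rexp (-(x ⬝ᵥ (P i j) *ᵥ x)) := by
    intro i j x
    simp only [hφdef, hPdef]
    rw [Matrix.add_mulVec, dotProduct_add, neg_add, Real.exp_add]
    ring
  have hφint : ∀ i j, Integrable (fun x : E => φ i x * φ j x) := by
    intro i j
    have : (fun x : E => φ i x * φ j x) =
        fun x : E => (c i * c j) * rexp (-(x ⬝ᵥ (P i j) *ᵥ x)) := funext (hprod i j)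
    rw [this]
    exact ((gauss (P i j) (hP i j)).1).const_mul _
  have hGint : ∀ i j, G i j = ∫ x : E, φ i x * φ j x := by
    intro i j
    have h1 : ∫ x : E, φ i x * φ j x =
        (c i * c j) * ∫ x : E, rexp (-(x ⬝ᵥ (P i j) *ᵥ x)) := by
      rw [show (fun x : E => φ i x * φ j x) =
        fun x : E => (c i * c j) * rexp (-(x ⬝ᵥ (P i j) *ᵥ x)) from funext (hprod i j)]
      exact integral_const_mul _ _
    rw [h1, (gauss (P i j) (hP i j)).2, hG]
    have hfold : ((1/2:ℝ) • (S i)⁻¹ + (1/2:ℝ) • (S j)⁻¹) = P i j := rfl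
    rw [hfold, Matrix.det_nonsing_inv, Ring.inverse_eq_inv']
    have h2 : ((P i j).det⁻¹) ^ ((1:ℝ)/2) = (Real.sqrt (P i j).det)⁻¹ := by
      rw [Real.inv_rpow (hPd i j).le, Real.sqrt_eq_rpow]
    have h3i : (S i).det ^ (-(1/4 : ℝ)) = ((S i).det ^ ((1:ℝ)/4))⁻¹ := by
      rw [← Real.rpow_neg (hd i).le]
    have h3j : (S j).det ^ (-(1/4 : ℝ)) = ((S j).det ^ ((1:ℝ)/4))⁻¹ := by
      rw [← Real.rpow_neg (hd j).le]
    have h4 : π ^ (-(n:ℝ)/4) * π ^ (-(n:ℝ)/4) * π ^ ((n:ℝ)/2) = 1 := by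
      rw [← Real.rpow_add pi_pos, ← Real.rpow_add pi_pos,
        show (-(n:ℝ)/4 + -(n:ℝ)/4 + (n:ℝ)/2) = 0 by ring, Real.rpow_zero]
    simp only [hcdef]
    rw [h2, h3i, h3j, div_eq_mul_inv, mul_inv]
    linear_combination (-(((Real.sqrt (P i j).det)⁻¹) *
      (((S i).det ^ ((1:ℝ)/4))⁻¹ * ((S j).det ^ ((1:ℝ)/4))⁻¹))) * h4
  have hGsymm : G.IsSymm := by
    show Gᵀ = G
    ext i j
    rw [Matrix.transpose_apply, hG, hG]
    rw [add_comm ((1/2:ℝ) • (S j)⁻¹), mul_comm ((S j).det ^ ((1:ℝ)/4))]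
  refine ⟨hGsymm, PosSemidef.of_dotProduct_mulVec_nonneg ?_ fun y => ?_⟩
  · show Gᴴ = G
    have : Gᴴ = Gᵀ := by
      ext i j
      simp [Matrix.conjTranspose_apply]
    rw [this]
    exact hGsymm
  · have hterm : ∀ i j : Fin M, y i * (G i j * y j) =
        ∫ x : E, y i * ((φ i x * φ j x) * y j) := by
      intro i j
      rw [hGint i j, integral_const_mul, integral_mul_const]
    have hII : ∀ i j : Fin M, Integrable (fun x : E => y i * ((φ i x * φ j x) * y j)) :=
      fun i j => (((hφint i j).mul_const _).const_mul _)
    have expand : dotProduct (star y) (G *ᵥ y) = ∑ i, ∑ j, y i * (G i j * y j) := by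
      simp [dotProduct, Matrix.mulVec, Finset.mul_sum]
    rw [expand]
    have swap1 : ∀ i, ∑ j, y i * (G i j * y j) =
        ∫ x : E, ∑ j, y i * ((φ i x * φ j x) * y j) := by
      intro i
      rw [integral_finset_sum _ (fun j _ => hII i j)]
      exact Finset.sum_congr rfl fun j _ => hterm i j
    have swap2 : ∑ i, ∑ j, y i * (G i j * y j) =
        ∫ x : E, ∑ i, ∑ j, y i * ((φ i x * φ j x) * y j) := by
      rw [integral_finset_sum _ (fun i _ => integrable_finset_sum _ (fun j _ => hII i j))]
      exact Finset.sum_congr rfl fun i _ => swap1 i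
    rw [swap2]
    apply integral_nonneg
    intro x
    have hs : ∑ i, ∑ j, y i * ((φ i x * φ j x) * y j) = (∑ i, y i * φ i x)^2 := by
      rw [sq, Finset.sum_mul_sum]
      exact Finset.sum_congr rfl fun i _ => Finset.sum_congr rfl fun j _ => by ring
    calc (0:ℝ) ≤ (∑ i, y i * φ i x)^2 := sq_nonneg _
      _ = _ := hs.symm
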